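/- Let G be a finitely generated nilpotent group of class at most 2 (i.e., G' ⊆ Z(G)) such that G' is finite and the abelianization G/G' is torsion-free, say free abelian of rank b. Then IA(G) is isomorphic to Inn(G) if and only if G/Z(G) is isomorphic to the direct product of b copies of G'. -/

import Mathlib

/-- The group of IA-automorphisms of `G`: automorphisms inducing the identity on the
abelianization `G/G'`. -/
def IA (G : Type*) [Group G] : Subgroup (MulAut G) where
  carrier := {α | ∀ g : G, g⁻¹ * α g ∈ commutator G}
  one_mem' := by intro g; simp
  mul_mem' := by
    intro α β hα hβ g
    have h : g⁻¹ * (α * β) g = (g⁻¹ * β g) * ((β g)⁻¹ * α (β g)) := by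
      simp [MulAut.mul_apply, mul_assoc]
    rw [Set.mem_setOf_eq] at *
    rw [h]
    exact mul_mem (hβ g) (hα (β g))
  inv_mem' := by
    intro α hα g
    have h := hα (α⁻¹ g)
    rw [MulAut.apply_inv_self] at h
    simpa using inv_mem h

/-- The group of inner automorphisms of `G`. -/
def Inn (G : Type*) [Group G] : Subgroup (MulAut G) :=
  (MulAut.conj : G →* MulAut G).range

open scoped commutatorElement IsMulCommutative

section Aux

variable {G : Type*} [Group G]

lemma commutatorElement_mul_center (x y c d : G) (hc : c ∈ Subgroup.center G)
    (hd : d ∈ Subgroup.center G) : ⁅x * c, y * d⁆ = ⁅x, y⁆ := by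
  have hc' := Subgroup.mem_center_iff.mp hc
  have hd' := Subgroup.mem_center_iff.mp hd
  have e1 : c * (y * d) * c⁻¹ = y * d := by rw [← hc' (y * d)]; group
  have e2 : d * x⁻¹ * d⁻¹ = x⁻¹ := by rw [← hd' x⁻¹]; group
  calc ⁅x * c, y * d⁆ = x * (c * (y * d) * c⁻¹) * x⁻¹ * (y * d)⁻¹ := by group
    _ = x * (y * d) * x⁻¹ * (y * d)⁻¹ := by rw [e1]
    _ = x * y * (d * x⁻¹ * d⁻¹) * y⁻¹ := by group
    _ = ⁅x, y⁆ := by rw [e2]; group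

variable (h2 : commutator G ≤ Subgroup.center G)
include h2

/-- An IA-automorphism of a class-2 group fixes the commutator subgroup pointwise. -/
lemma IA_fixes_commutator (α : IA G) {g : G} (hg : g ∈ commutator G) :
    (α : MulAut G) g = g := by
  have : commutator G ≤ MonoidHom.eqLocus (α : MulAut G).toMonoidHom (MonoidHom.id G) := by
    rw [commutator_def, Subgroup.commutator_le]
    intro x _ y _
    show (α : MulAut G) ⁅x, y⁆ = ⁅x, y⁆
    have hx : (α : MulAut G) x = x * (x⁻¹ * (α : MulAut G) x) := by group
    have hy : (α : MulAut G) y = y * (y⁻¹ * (α : MulAut G) y) := by group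
    rw [map_commutatorElement, hx, hy,
      commutatorElement_mul_center _ _ _ _ (h2 (α.2 x)) (h2 (α.2 y))]
  exact this hg

/-- The homomorphism `g ↦ g⁻¹ α g` into the commutator subgroup. -/
def IAhom (α : IA G) : G →* commutator G where
  toFun g := ⟨g⁻¹ * (α : MulAut G) g, α.2 g⟩
  map_one' := by ext; simp
  map_mul' g h := by
    ext
    show (g * h)⁻¹ * (α : MulAut G) (g * h) = (g⁻¹ * (α : MulAut G) g) * (h⁻¹ * (α : MulAut G) h)
    have hc := Subgroup.mem_center_iff.mp (h2 (α.2 g))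
    rw [map_mul, mul_inv_rev]
    calc h⁻¹ * g⁻¹ * ((α : MulAut G) g * (α : MulAut G) h)
        = h⁻¹ * (g⁻¹ * (α : MulAut G) g) * (α : MulAut G) h := by group
      _ = (g⁻¹ * (α : MulAut G) g) * (h⁻¹ * (α : MulAut G) h) := by
          rw [hc h⁻¹]; group

lemma IAhom_commutator_eq_one (α : IA G) {g : G} (hg : g ∈ commutator G) :
    IAhom h2 α g = 1 := by
  ext
  show g⁻¹ * (α : MulAut G) g = 1
  rw [IA_fixes_commutator h2 α hg, inv_mul_cancel]

end Aux

section Phi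

variable {G : Type*} [Group G] (h2 : commutator G ≤ Subgroup.center G)
  [inst : IsMulCommutative (commutator G)]

/-- The homomorphism `IA G →* Hom(G/G', G')`. -/
def Phi : IA G →* ((G ⧸ commutator G) →* commutator G) where
  toFun α := QuotientGroup.lift (commutator G) (IAhom h2 α)
    (fun _ hg => IAhom_commutator_eq_one h2 α hg)
  map_one' := by
    ext g
    show g⁻¹ * ((1 : IA G) : MulAut G) g = ((1 : commutator G) : G)
    simp
  map_mul' α β := by
    ext g
    show g⁻¹ * ((α : MulAut G) * (β : MulAut G)) g
      = (g⁻¹ * (α : MulAut G) g) * (g⁻¹ * (β : MulAut G) g)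
    show g⁻¹ * (α : MulAut G) ((β : MulAut G) g)
      = (g⁻¹ * (α : MulAut G) g) * (g⁻¹ * (β : MulAut G) g)
    rw [show (β : MulAut G) g = g * (g⁻¹ * (β : MulAut G) g) by group, map_mul,
      IA_fixes_commutator h2 α (β.2 g)]
    group

lemma Phi_injective : Function.Injective (Phi h2) := by
  rw [← MonoidHom.ker_eq_bot_iff, eq_bot_iff]
  intro α hα
  rw [MonoidHom.mem_ker] at hα
  have key : ∀ g : G, (α : MulAut G) g = g := by
    intro g
    have h1 : Phi h2 α (QuotientGroup.mk g) = 1 := by rw [hα]; rfl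
    have this : g⁻¹ * (α : MulAut G) g = 1 := congrArg Subtype.val h1
    calc (α : MulAut G) g = g * (g⁻¹ * (α : MulAut G) g) := by group
      _ = g := by rw [this, mul_one]
  rw [Subgroup.mem_bot]
  ext1
  exact MulEquiv.ext key

lemma Phi_surjective : Function.Surjective (Phi h2) := by
  intro F
  set φ : G →* G :=
    (commutator G).subtype.comp (F.comp (QuotientGroup.mk' (commutator G))) with hφ
  have hφmem : ∀ g : G, φ g ∈ commutator G := fun g => (F (QuotientGroup.mk g)).2
  have hφker : ∀ g : G, g ∈ commutator G → φ g = 1 := by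
    intro g hg
    have : QuotientGroup.mk' (commutator G) g = 1 := by
      rwa [← QuotientGroup.ker_mk' (commutator G), MonoidHom.mem_ker] at hg
    simp [hφ, MonoidHom.comp_apply, this]
  have hcen : ∀ g z : G, z * φ g = φ g * z := fun g z =>
    Subgroup.mem_center_iff.mp (h2 (hφmem g)) z
  refine ⟨⟨{ toFun := fun g => g * φ g
             invFun := fun g => g * (φ g)⁻¹
             left_inv := fun g => by
               simp only [map_mul, hφker _ (hφmem g), mul_one, mul_inv_rev]
               group
             right_inv := fun g => by
               simp only [map_mul, map_inv, hφker _ (hφmem g), inv_one, mul_one]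
               group
             map_mul' := fun g h => by
               simp only [map_mul]
               calc g * h * (φ g * φ h) = g * (h * φ g) * φ h := by group
                 _ = g * (φ g * h) * φ h := by rw [hcen g h]
                 _ = g * φ g * (h * φ h) := by group }, ?_⟩, ?_⟩
  · intro g
    show g⁻¹ * (g * φ g) ∈ commutator G
    rw [show g⁻¹ * (g * φ g) = φ g by group]
    exact hφmem g
  · ext g
    show g⁻¹ * (g * φ g) = ((F (QuotientGroup.mk g) : commutator G) : G)
    rw [show g⁻¹ * (g * φ g) = φ g by group]
    rfl

/-- `IA G` is isomorphic to `Hom(G/G', G')` for class-2 groups. -/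
noncomputable def IAEquiv : IA G ≃* ((G ⧸ commutator G) →* commutator G) :=
  MulEquiv.ofBijective (Phi h2) ⟨Phi_injective h2, Phi_surjective h2⟩

end Phi

section PiEquiv

open Multiplicative

/-- Homomorphisms from `ℤ^b` to a commutative group `A` correspond to `A^b`. -/
def homPiEquiv (b : ℕ) (A : Type*) [CommGroup A] :
    (Multiplicative (Fin b → ℤ) →* A) ≃* (Fin b → A) where
  toFun f i := f (ofAdd (Pi.single i 1))
  invFun a :=
    { toFun := fun x => ∏ i, a i ^ (toAdd x i)
      map_one' := by simp
      map_mul' := fun x y => by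
        simp only [toAdd_mul, Pi.add_apply, zpow_add]
        rw [Finset.prod_mul_distrib] }
  left_inv f := by
    refine MonoidHom.ext fun x => ?_
    show ∏ i, (f (ofAdd (Pi.single i 1))) ^ (toAdd x i) = f x
    have key : ∀ i : Fin b, (f (ofAdd (Pi.single i 1))) ^ (toAdd x i)
        = f (ofAdd (Pi.single i (toAdd x i))) := by
      intro i
      rw [← map_zpow, ← ofAdd_zsmul]
      have hs : (toAdd x i) • (Pi.single i (1 : ℤ) : Fin b → ℤ) = Pi.single i (toAdd x i) := by
        funext j
        by_cases h : j = i <;> simp [Pi.single_apply, h]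
      rw [hs]
    rw [Finset.prod_congr rfl fun i _ => key i, ← map_prod, ← ofAdd_sum,
      Finset.univ_sum_single (toAdd x)]
    rfl
  right_inv a := by
    funext i
    show ∏ j, a j ^ (toAdd (ofAdd (Pi.single i 1)) j) = a i
    rw [Finset.prod_eq_single i (fun j _ hj => by simp [Pi.single_apply, hj])
      (fun h => absurd (Finset.mem_univ i) h)]
    simp
  map_mul' f g := rfl

end PiEquiv

section Inner

variable (G : Type*) [Group G]

lemma ker_conj_eq_center : (MulAut.conj : G →* MulAut G).ker = Subgroup.center G := by
  ext g
  rw [MonoidHom.mem_ker, Subgroup.mem_center_iff]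
  constructor
  · intro h z
    have := congrArg (fun e : MulAut G => e z) h
    simp only [MulAut.conj_apply, MulAut.one_apply] at this
    calc z * g = (g * z * g⁻¹) * g := by rw [this]
      _ = g * z := by group
  · intro h
    ext z
    show g * z * g⁻¹ = z
    rw [← h z]
    group

/-- `Inn G` is isomorphic to `G ⧸ Z(G)`. -/
noncomputable def innEquiv : Inn G ≃* G ⧸ Subgroup.center G :=
  ((QuotientGroup.quotientMulEquivOfEq (ker_conj_eq_center G)).symm.trans
    (QuotientGroup.quotientKerEquivRange (MulAut.conj : G →* MulAut G))).symm

end Inner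


/-- For a finitely generated nilpotent group `G` of class at most 2 with `G'` finite and
`G/G'` free abelian of rank `b`, `IA(G) ≅ Inn(G)` iff `G/Z(G)` is a direct product of
`b` copies of `G'`. -/
theorem IA_iso_Inn_iff_of_finite_commutator (G : Type*) [Group G] [Group.FG G]
    (h2 : commutator G ≤ Subgroup.center G) [Finite (commutator G)] (b : ℕ)
    (hab : Nonempty ((G ⧸ commutator G) ≃* Multiplicative (Fin b → ℤ))) :
    Nonempty (IA G ≃* Inn G) ↔
      Nonempty ((G ⧸ Subgroup.center G) ≃* (Fin b → commutator G)) := by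
  haveI : IsMulCommutative (commutator G) :=
    ⟨⟨fun a b => Subtype.ext (Subgroup.mem_center_iff.mp (h2 b.2) a)⟩⟩
  obtain ⟨e⟩ := hab
  let E : IA G ≃* (Fin b → commutator G) :=
    (IAEquiv h2).trans ((MulEquiv.monoidHomCongrLeft e).trans
      (homPiEquiv b (commutator G)))
  constructor
  · rintro ⟨i⟩
    exact ⟨((innEquiv G).symm.trans i.symm).trans E⟩
  · rintro ⟨j⟩
    exact ⟨(E.trans j.symm).trans (innEquiv G).symm⟩
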